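/- For all m, n ≥ 3 there exist right ideals L' and L, with alphabets Σ_{L'} and Σ_L satisfying Σ_{L'} \ Σ_L ≠ ∅ and Σ_L \ Σ_{L'} ≠ ∅, such that L' has quotient complexity m, L has quotient complexity n, κ(L' ∪ L) = (m+1)(n+1), and κ(L' ⊕ L) = (m+1)(n+1), where L' ⊕ L = (L' \ L) ∪ (L \ L') is the symmetric difference. (Thus the unrestricted complexity of union and symmetric difference on right ideals equals that on arbitrary regular languages.) -/

import Mathlib

/-- The alphabet of a language: letters occurring in some word of `L`. -/
def alphabetOf {α : Type*} (L : Language α) : Set α :=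
  {a | ∃ u v : List α, u ++ [a] ++ v ∈ L}

/-- The left quotient of `L` by a word `w`. -/
def leftQuotient {α : Type*} (L : Language α) (w : List α) : Language α :=
  {x | w ++ x ∈ L}

/-- The set of left quotients of `L` by words over the alphabet of `L`. -/
def quotientSet {α : Type*} (L : Language α) : Set (Language α) :=
  {K | ∃ w : List α, (∀ a ∈ w, a ∈ alphabetOf L) ∧ K = leftQuotient L w}

/-- `L` is regular with quotient complexity `m`: the set of its left quotients
(by words over its own alphabet) is finite of cardinality exactly `m`. -/
def HasComplexity {α : Type*} (L : Language α) (m : ℕ) : Prop :=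
  (quotientSet L).Finite ∧ (quotientSet L).ncard = m

/-- All words whose letters lie in `S`. -/
def starOf {α : Type*} (S : Set α) : Language α :=
  {w | ∀ a ∈ w, a ∈ S}

/-- A nonempty language `L` is a right ideal if `L · Σ_L^* = L`. -/
def IsRightIdeal {α : Type*} (L : Language α) : Prop :=
  (∃ w, w ∈ L) ∧ L * starOf (alphabetOf L) = L

/-- A nonempty language `L` is a left ideal if `Σ_L^* · L = L`. -/
def IsLeftIdeal {α : Type*} (L : Language α) : Prop :=
  (∃ w, w ∈ L) ∧ starOf (alphabetOf L) * L = L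

/-- A nonempty language `L` is a two-sided ideal if `Σ_L^* · L · Σ_L^* = L`. -/
def IsTwoSidedIdeal {α : Type*} (L : Language α) : Prop :=
  (∃ w, w ∈ L) ∧ starOf (alphabetOf L) * L * starOf (alphabetOf L) = L

namespace RightIdealWitness

def okA (a : Fin 5) : Prop := a = 0 ∨ a = 1 ∨ a = 2
def okB (a : Fin 5) : Prop := a = 0 ∨ a = 1 ∨ a = 3

instance : DecidablePred okA := fun a => by unfold okA; infer_instance
instance : DecidablePred okB := fun a => by unfold okB; infer_instance

/-- Quotients of the first witness language; `QA m 0` is the language itself. -/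
def QA (m i : ℕ) : Language (Fin 5) := {x | (∀ a ∈ x, okA a) ∧ m - 1 - i ≤ x.count 0}
def QB (n j : ℕ) : Language (Fin 5) := {x | (∀ a ∈ x, okB a) ∧ n - 1 - j ≤ x.count 1}

/-- Quotient states including the dead state (index `≥ m`). -/
def OA (m i : ℕ) : Language (Fin 5) := if i < m then QA m i else ⊥
def OB (n j : ℕ) : Language (Fin 5) := if j < n then QB n j else ⊥

lemma mem_QA {m i : ℕ} {x : List (Fin 5)} :
    x ∈ QA m i ↔ (∀ a ∈ x, okA a) ∧ m - 1 - i ≤ x.count 0 := Iff.rfl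
lemma mem_QB {n j : ℕ} {x : List (Fin 5)} :
    x ∈ QB n j ↔ (∀ a ∈ x, okB a) ∧ n - 1 - j ≤ x.count 1 := Iff.rfl

lemma QA_congr {m i i' : ℕ} (h : m - 1 - i = m - 1 - i') : QA m i = QA m i' := by
  unfold QA; rw [h]
lemma QB_congr {n j j' : ℕ} (h : n - 1 - j = n - 1 - j') : QB n j = QB n j' := by
  unfold QB; rw [h]

lemma quot_QA (m i : ℕ) (w : List (Fin 5)) :
    leftQuotient (QA m i) w =
      if ∀ a ∈ w, okA a then QA m (i + w.count 0) else ⊥ := by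
  ext x
  by_cases h : ∀ a ∈ w, okA a
  · rw [if_pos h]
    show w ++ x ∈ QA m i ↔ x ∈ QA m (i + w.count 0)
    simp only [mem_QA, List.count_append]
    constructor
    · rintro ⟨h1, h2⟩
      exact ⟨fun a ha => h1 a (List.mem_append.2 (Or.inr ha)), by omega⟩
    · rintro ⟨h1, h2⟩
      refine ⟨fun a ha => (List.mem_append.1 ha).elim (h a) (h1 a), by omega⟩
  · rw [if_neg h]
    show w ++ x ∈ QA m i ↔ x ∈ (⊥ : Language (Fin 5))
    constructor
    · rintro ⟨h1, -⟩
      exact absurd (fun a ha => h1 a (List.mem_append.2 (Or.inl ha))) h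
    · rintro ⟨⟩

lemma quot_QB (n j : ℕ) (w : List (Fin 5)) :
    leftQuotient (QB n j) w =
      if ∀ a ∈ w, okB a then QB n (j + w.count 1) else ⊥ := by
  ext x
  by_cases h : ∀ a ∈ w, okB a
  · rw [if_pos h]
    show w ++ x ∈ QB n j ↔ x ∈ QB n (j + w.count 1)
    simp only [mem_QB, List.count_append]
    constructor
    · rintro ⟨h1, h2⟩
      exact ⟨fun a ha => h1 a (List.mem_append.2 (Or.inr ha)), by omega⟩
    · rintro ⟨h1, h2⟩
      refine ⟨fun a ha => (List.mem_append.1 ha).elim (h a) (h1 a), by omega⟩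
  · rw [if_neg h]
    show w ++ x ∈ QB n j ↔ x ∈ (⊥ : Language (Fin 5))
    constructor
    · rintro ⟨h1, -⟩
      exact absurd (fun a ha => h1 a (List.mem_append.2 (Or.inl ha))) h
    · rintro ⟨⟩

/-- State reached in the first automaton after reading `w` (`m` = dead). -/
def stA (m : ℕ) (w : List (Fin 5)) : ℕ :=
  if ∀ a ∈ w, okA a then min (w.count 0) (m - 1) else m
def stB (n : ℕ) (w : List (Fin 5)) : ℕ :=
  if ∀ a ∈ w, okB a then min (w.count 1) (n - 1) else n

lemma stA_le (m : ℕ) (hm : 1 ≤ m) (w : List (Fin 5)) : stA m w ≤ m := by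
  unfold stA; split <;> omega
lemma stB_le (n : ℕ) (hn : 1 ≤ n) (w : List (Fin 5)) : stB n w ≤ n := by
  unfold stB; split <;> omega

lemma quot_OA (m : ℕ) (hm : 1 ≤ m) (w : List (Fin 5)) :
    leftQuotient (QA m 0) w = OA m (stA m w) := by
  rw [quot_QA]
  unfold stA OA
  by_cases h : ∀ a ∈ w, okA a
  · rw [if_pos h, if_pos h, if_pos (by omega : min (w.count 0) (m-1) < m)]
    exact QA_congr (by omega)
  · rw [if_neg h, if_neg h, if_neg (by omega : ¬ m < m)]

lemma quot_OB (n : ℕ) (hn : 1 ≤ n) (w : List (Fin 5)) :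
    leftQuotient (QB n 0) w = OB n (stB n w) := by
  rw [quot_QB]
  unfold stB OB
  by_cases h : ∀ a ∈ w, okB a
  · rw [if_pos h, if_pos h, if_pos (by omega : min (w.count 1) (n-1) < n)]
    exact QB_congr (by omega)
  · rw [if_neg h, if_neg h, if_neg (by omega : ¬ n < n)]

lemma leftQuotient_union {α : Type*} (A B : Language α) (w : List α) :
    leftQuotient (A ⊔ B) w = leftQuotient A w ⊔ leftQuotient B w := rfl

lemma leftQuotient_sdiff {α : Type*} (A B : Language α) (w : List α) :
    leftQuotient (A \ B) w = leftQuotient A w \ leftQuotient B w := rfl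

/-! ### Alphabets -/

lemma alphabetOf_A (m : ℕ) : alphabetOf (QA m 0) = {a | okA a} := by
  ext a
  constructor
  · rintro ⟨u, v, hu, -⟩
    exact hu a (by simp)
  · intro ha
    refine ⟨[], List.replicate (m-1) 0, ?_, ?_⟩
    · intro b hb
      rcases List.mem_append.1 hb with hb | hb
      · rcases List.mem_append.1 hb with hb | hb
        · cases hb
        · exact List.mem_singleton.1 hb ▸ ha
      · rw [(List.mem_replicate.1 hb).2]; left; rfl
    · show m - 1 - 0 ≤ List.count 0 ([] ++ [a] ++ List.replicate (m - 1) 0)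
      rw [List.nil_append, List.count_append]
      have h0 : List.count (0 : Fin 5) (List.replicate (m-1) 0) = m - 1 := by
        simp [List.count_replicate]
      omega

lemma alphabetOf_B (n : ℕ) : alphabetOf (QB n 0) = {a | okB a} := by
  ext a
  constructor
  · rintro ⟨u, v, hu, -⟩
    exact hu a (by simp)
  · intro ha
    refine ⟨[], List.replicate (n-1) 1, ?_, ?_⟩
    · intro b hb
      rcases List.mem_append.1 hb with hb | hb
      · rcases List.mem_append.1 hb with hb | hb
        · cases hb
        · exact List.mem_singleton.1 hb ▸ ha
      · rw [(List.mem_replicate.1 hb).2]; right; left; rfl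
    · show n - 1 - 0 ≤ List.count 1 ([] ++ [a] ++ List.replicate (n - 1) 1)
      rw [List.nil_append, List.count_append]
      have h0 : List.count (1 : Fin 5) (List.replicate (n-1) 1) = n - 1 := by
        simp [List.count_replicate]
      omega

/-! ### Right ideal property -/

lemma rightIdeal_A (m : ℕ) : IsRightIdeal (QA m 0) := by
  constructor
  · exact ⟨List.replicate (m-1) 0, by
      constructor
      · intro a ha
        rw [(List.mem_replicate.1 ha).2]; left; rfl
      · simp [List.count_replicate]⟩
  · rw [alphabetOf_A]
    ext x
    rw [Language.mem_mul]
    constructor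
    · rintro ⟨u, hu, v, hv, rfl⟩
      refine ⟨?_, ?_⟩
      · intro a ha
        rcases List.mem_append.1 ha with h | h
        · exact hu.1 a h
        · exact hv a h
      · rw [List.count_append]
        have := hu.2
        omega
    · intro hx
      exact ⟨x, hx, [], ⟨fun a ha => absurd ha List.not_mem_nil, by simp⟩⟩

lemma rightIdeal_B (n : ℕ) : IsRightIdeal (QB n 0) := by
  constructor
  · exact ⟨List.replicate (n-1) 1, by
      constructor
      · intro a ha
        rw [(List.mem_replicate.1 ha).2]; right; left; rfl
      · simp [List.count_replicate]⟩
  · rw [alphabetOf_B]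
    ext x
    rw [Language.mem_mul]
    constructor
    · rintro ⟨u, hu, v, hv, rfl⟩
      refine ⟨?_, ?_⟩
      · intro a ha
        rcases List.mem_append.1 ha with h | h
        · exact hu.1 a h
        · exact hv a h
      · rw [List.count_append]
        have := hu.2
        omega
    · intro hx
      exact ⟨x, hx, [], ⟨fun a ha => absurd ha List.not_mem_nil, by simp⟩⟩

/-! ### Complexity of the individual languages -/

lemma quotSet_A (m : ℕ) (hm : 1 ≤ m) : quotientSet (QA m 0) = QA m '' Set.Iio m := by
  ext K
  constructor
  · rintro ⟨w, hw, rfl⟩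
    rw [quot_OA m hm w]
    unfold OA
    refine ⟨stA m w, ?_, ?_⟩
    · have := stA_le m hm w
      unfold stA at this ⊢
      by_cases h : ∀ a ∈ w, okA a
      · rw [if_pos h]; simp only [Set.mem_Iio]; omega
      · -- dead state unreachable: all letters of w are in the alphabet
        exfalso
        apply h
        intro a ha
        have := hw a ha
        rw [alphabetOf_A] at this
        exact this
    · have h : ∀ a ∈ w, okA a := by
        intro a ha
        have := hw a ha
        rw [alphabetOf_A] at this
        exact this
      unfold stA
      rw [if_pos h, if_pos (by omega : min (w.count 0) (m-1) < m)]
  · rintro ⟨i, hi, rfl⟩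
    refine ⟨List.replicate i 0, ?_, ?_⟩
    · intro a ha
      rw [alphabetOf_A, (List.mem_replicate.1 ha).2]
      left; rfl
    · rw [quot_QA, if_pos]
      · exact QA_congr (by simp [List.count_replicate])
      · intro a ha
        rw [(List.mem_replicate.1 ha).2]; left; rfl

lemma QA_injOn (m : ℕ) : Set.InjOn (QA m) (Set.Iio m) := by
  intro i hi i' hi' h
  simp only [Set.mem_Iio] at hi hi'
  have key : ∀ j : ℕ, (List.replicate (m-1-j) 0 ∈ QA m j) := by
    intro j
    refine ⟨fun a ha => by rw [(List.mem_replicate.1 ha).2]; left; rfl, ?_⟩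
    simp [List.count_replicate]
  have h1 : List.replicate (m-1-i) 0 ∈ QA m i' := h ▸ key i
  have h2 : List.replicate (m-1-i') 0 ∈ QA m i := h ▸ key i'
  have c1 := h1.2
  have c2 := h2.2
  simp only [List.count_replicate, if_pos rfl] at c1 c2
  simp at c1 c2
  omega

lemma hasComplexity_A (m : ℕ) (hm : 1 ≤ m) : HasComplexity (QA m 0) m := by
  rw [HasComplexity, quotSet_A m hm]
  constructor
  · exact (Set.finite_Iio m).image _
  · rw [Set.ncard_image_of_injOn (QA_injOn m), ← Finset.coe_range,
      Set.ncard_coe_finset, Finset.card_range]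

lemma quotSet_B (n : ℕ) (hn : 1 ≤ n) : quotientSet (QB n 0) = QB n '' Set.Iio n := by
  ext K
  constructor
  · rintro ⟨w, hw, rfl⟩
    rw [quot_OB n hn w]
    unfold OB
    refine ⟨stB n w, ?_, ?_⟩
    · have := stB_le n hn w
      unfold stB at this ⊢
      by_cases h : ∀ a ∈ w, okB a
      · rw [if_pos h]; simp only [Set.mem_Iio]; omega
      · exfalso
        apply h
        intro a ha
        have := hw a ha
        rw [alphabetOf_B] at this
        exact this
    · have h : ∀ a ∈ w, okB a := by
        intro a ha
        have := hw a ha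
        rw [alphabetOf_B] at this
        exact this
      unfold stB
      rw [if_pos h, if_pos (by omega : min (w.count 1) (n-1) < n)]
  · rintro ⟨j, hj, rfl⟩
    refine ⟨List.replicate j 1, ?_, ?_⟩
    · intro a ha
      rw [alphabetOf_B, (List.mem_replicate.1 ha).2]
      right; left; rfl
    · rw [quot_QB, if_pos]
      · exact QB_congr (by simp [List.count_replicate])
      · intro a ha
        rw [(List.mem_replicate.1 ha).2]; right; left; rfl

lemma QB_injOn (n : ℕ) : Set.InjOn (QB n) (Set.Iio n) := by
  intro j hj j' hj' h
  simp only [Set.mem_Iio] at hj hj'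
  have key : ∀ i : ℕ, (List.replicate (n-1-i) 1 ∈ QB n i) := by
    intro i
    refine ⟨fun a ha => by rw [(List.mem_replicate.1 ha).2]; right; left; rfl, ?_⟩
    simp [List.count_replicate]
  have h1 : List.replicate (n-1-j) 1 ∈ QB n j' := h ▸ key j
  have h2 : List.replicate (n-1-j') 1 ∈ QB n j := h ▸ key j'
  have c1 := h1.2
  have c2 := h2.2
  simp only [List.count_replicate, if_pos rfl] at c1 c2
  simp at c1 c2
  omega

lemma hasComplexity_B (n : ℕ) (hn : 1 ≤ n) : HasComplexity (QB n 0) n := by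
  rw [HasComplexity, quotSet_B n hn]
  constructor
  · exact (Set.finite_Iio n).image _
  · rw [Set.ncard_image_of_injOn (QB_injOn n), ← Finset.coe_range,
      Set.ncard_coe_finset, Finset.card_range]


/-! ### Union and symmetric difference -/

def okC (a : Fin 5) : Prop := a = 0 ∨ a = 1 ∨ a = 2 ∨ a = 3

def UU (m n : ℕ) (p : ℕ × ℕ) : Language (Fin 5) := OA m p.1 ⊔ OB n p.2
def DD (m n : ℕ) (p : ℕ × ℕ) : Language (Fin 5) :=
  (OA m p.1 \ OB n p.2) ⊔ (OB n p.2 \ OA m p.1)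

lemma quot_UU (m n : ℕ) (hm : 1 ≤ m) (hn : 1 ≤ n) (w : List (Fin 5)) :
    leftQuotient (QA m 0 ⊔ QB n 0) w = UU m n (stA m w, stB n w) := by
  rw [leftQuotient_union, quot_OA m hm w, quot_OB n hn w]; rfl

lemma quot_DD (m n : ℕ) (hm : 1 ≤ m) (hn : 1 ≤ n) (w : List (Fin 5)) :
    leftQuotient ((QA m 0 \ QB n 0) ⊔ (QB n 0 \ QA m 0)) w
      = DD m n (stA m w, stB n w) := by
  rw [leftQuotient_union, leftQuotient_sdiff, leftQuotient_sdiff,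
    quot_OA m hm w, quot_OB n hn w]; rfl

/-- Test words for the first coordinate. -/
lemma testA_QA (m i k : ℕ) :
    List.replicate k 0 ++ [2] ∈ QA m i ↔ m - 1 - i ≤ k := by
  constructor
  · rintro ⟨-, h2⟩
    rw [List.count_append] at h2
    have h0 : List.count (0 : Fin 5) (List.replicate k 0) = k := by
      simp [List.count_replicate]
    have h1 : List.count (0 : Fin 5) [2] = 0 := by decide
    omega
  · intro hk
    refine ⟨?_, ?_⟩
    · intro a ha
      rcases List.mem_append.1 ha with ha | ha
      · rw [(List.mem_replicate.1 ha).2]; left; rfl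
      · rw [List.mem_singleton.1 ha]; right; right; rfl
    · show m - 1 - i ≤ List.count 0 (List.replicate k 0 ++ [2])
      rw [List.count_append]
      have h0 : List.count (0 : Fin 5) (List.replicate k 0) = k := by
        simp [List.count_replicate]
      omega

lemma testA_not_QB (n j k : ℕ) : List.replicate k 0 ++ [2] ∉ QB n j := by
  rintro ⟨h1, -⟩
  have := h1 2 (List.mem_append.2 (Or.inr (List.mem_singleton.2 rfl)))
  revert this
  decide

lemma testB_QB (n j k : ℕ) :
    List.replicate k 1 ++ [3] ∈ QB n j ↔ n - 1 - j ≤ k := by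
  constructor
  · rintro ⟨-, h2⟩
    rw [List.count_append] at h2
    have h0 : List.count (1 : Fin 5) (List.replicate k 1) = k := by
      simp [List.count_replicate]
    have h1 : List.count (1 : Fin 5) [3] = 0 := by decide
    omega
  · intro hk
    refine ⟨?_, ?_⟩
    · intro a ha
      rcases List.mem_append.1 ha with ha | ha
      · rw [(List.mem_replicate.1 ha).2]; right; left; rfl
      · rw [List.mem_singleton.1 ha]; right; right; rfl
    · show n - 1 - j ≤ List.count 1 (List.replicate k 1 ++ [3])
      rw [List.count_append]
      have h0 : List.count (1 : Fin 5) (List.replicate k 1) = k := by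
        simp [List.count_replicate]
      omega

lemma testB_not_QA (m i k : ℕ) : List.replicate k 1 ++ [3] ∉ QA m i := by
  rintro ⟨h1, -⟩
  have := h1 3 (List.mem_append.2 (Or.inr (List.mem_singleton.2 rfl)))
  revert this
  decide

lemma testA_OA (m i k : ℕ) :
    List.replicate k 0 ++ [2] ∈ OA m i ↔ (i < m ∧ m - 1 - i ≤ k) := by
  unfold OA
  split
  · rw [testA_QA]
    constructor
    · intro h; exact ⟨by assumption, h⟩
    · exact fun h => h.2
  · constructor
    · rintro ⟨⟩
    · rintro ⟨h, -⟩; omega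

lemma testA_not_OB (n j k : ℕ) : List.replicate k 0 ++ [2] ∉ OB n j := by
  unfold OB
  split
  · exact testA_not_QB n j k
  · rintro ⟨⟩

lemma testB_OB (n j k : ℕ) :
    List.replicate k 1 ++ [3] ∈ OB n j ↔ (j < n ∧ n - 1 - j ≤ k) := by
  unfold OB
  split
  · rw [testB_QB]
    constructor
    · intro h; exact ⟨by assumption, h⟩
    · exact fun h => h.2
  · constructor
    · rintro ⟨⟩
    · rintro ⟨h, -⟩; omega

lemma testB_not_OA (m i k : ℕ) : List.replicate k 1 ++ [3] ∉ OA m i := by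
  unfold OA
  split
  · exact testB_not_QA m i k
  · rintro ⟨⟩

lemma testA_UU (m n i j k : ℕ) :
    List.replicate k 0 ++ [2] ∈ UU m n (i, j) ↔ (i < m ∧ m - 1 - i ≤ k) := by
  show _ ∈ OA m i ∨ _ ∈ OB n j ↔ _
  rw [← testA_OA m i k]
  constructor
  · rintro (h | h)
    · exact h
    · exact absurd h (testA_not_OB n j k)
  · exact Or.inl

lemma testB_UU (m n i j k : ℕ) :
    List.replicate k 1 ++ [3] ∈ UU m n (i, j) ↔ (j < n ∧ n - 1 - j ≤ k) := by
  show _ ∈ OA m i ∨ _ ∈ OB n j ↔ _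
  rw [← testB_OB n j k]
  constructor
  · rintro (h | h)
    · exact absurd h (testB_not_OA m i k)
    · exact h
  · exact Or.inr

lemma testA_DD (m n i j k : ℕ) :
    List.replicate k 0 ++ [2] ∈ DD m n (i, j) ↔ (i < m ∧ m - 1 - i ≤ k) := by
  show (_ ∈ OA m i ∧ _ ∉ OB n j) ∨ (_ ∈ OB n j ∧ _ ∉ OA m i) ↔ _
  rw [← testA_OA m i k]
  constructor
  · rintro (⟨h, -⟩ | ⟨h, -⟩)
    · exact h
    · exact absurd h (testA_not_OB n j k)
  · exact fun h => Or.inl ⟨h, testA_not_OB n j k⟩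

lemma testB_DD (m n i j k : ℕ) :
    List.replicate k 1 ++ [3] ∈ DD m n (i, j) ↔ (j < n ∧ n - 1 - j ≤ k) := by
  show (_ ∈ OA m i ∧ _ ∉ OB n j) ∨ (_ ∈ OB n j ∧ _ ∉ OA m i) ↔ _
  rw [← testB_OB n j k]
  constructor
  · rintro (⟨h, -⟩ | ⟨h, -⟩)
    · exact absurd h (testB_not_OA m i k)
    · exact h
  · exact fun h => Or.inr ⟨h, testB_not_OA m i k⟩

lemma idx_inj {m i i' : ℕ} (hi : i ≤ m) (hi' : i' ≤ m)
    (h : ∀ k, (i < m ∧ m - 1 - i ≤ k) ↔ (i' < m ∧ m - 1 - i' ≤ k)) : i = i' := by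
  by_cases h1 : i < m
  · obtain ⟨h2, h3⟩ := (h (m - 1 - i)).1 ⟨h1, le_refl _⟩
    obtain ⟨-, h4⟩ := (h (m - 1 - i')).2 ⟨h2, le_refl _⟩
    omega
  · by_cases h2 : i' < m
    · obtain ⟨h3, -⟩ := (h (m - 1 - i')).2 ⟨h2, le_refl _⟩
      omega
    · omega

lemma UU_injOn (m n : ℕ) :
    Set.InjOn (UU m n) (Set.Iio (m+1) ×ˢ Set.Iio (n+1)) := by
  rintro ⟨i, j⟩ ⟨hi, hj⟩ ⟨i', j'⟩ ⟨hi', hj'⟩ h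
  simp only [Set.mem_Iio] at hi hj hi' hj'
  have hA : ∀ k, (i < m ∧ m - 1 - i ≤ k) ↔ (i' < m ∧ m - 1 - i' ≤ k) := by
    intro k
    rw [← testA_UU m n i j k, ← testA_UU m n i' j' k, h]
  have hB : ∀ k, (j < n ∧ n - 1 - j ≤ k) ↔ (j' < n ∧ n - 1 - j' ≤ k) := by
    intro k
    rw [← testB_UU m n i j k, ← testB_UU m n i' j' k, h]
  have e1 := idx_inj (by omega) (by omega) hA
  have e2 := idx_inj (by omega) (by omega) hB
  simp [e1, e2]

lemma DD_injOn (m n : ℕ) :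
    Set.InjOn (DD m n) (Set.Iio (m+1) ×ˢ Set.Iio (n+1)) := by
  rintro ⟨i, j⟩ ⟨hi, hj⟩ ⟨i', j'⟩ ⟨hi', hj'⟩ h
  simp only [Set.mem_Iio] at hi hj hi' hj'
  have hA : ∀ k, (i < m ∧ m - 1 - i ≤ k) ↔ (i' < m ∧ m - 1 - i' ≤ k) := by
    intro k
    rw [← testA_DD m n i j k, ← testA_DD m n i' j' k, h]
  have hB : ∀ k, (j < n ∧ n - 1 - j ≤ k) ↔ (j' < n ∧ n - 1 - j' ≤ k) := by
    intro k
    rw [← testB_DD m n i j k, ← testB_DD m n i' j' k, h]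
  have e1 := idx_inj (by omega) (by omega) hA
  have e2 := idx_inj (by omega) (by omega) hB
  simp [e1, e2]

/-! ### Witness words reaching every state pair -/

def wit (m n i j : ℕ) : List (Fin 5) :=
  List.replicate (min i (m-1)) 0 ++ List.replicate (min j (n-1)) 1 ++
    (if i < m then [] else [3]) ++ (if j < n then [] else [2])

lemma wit_okC (m n i j : ℕ) : ∀ a ∈ wit m n i j, okC a := by
  intro a ha
  unfold wit at ha
  rcases List.mem_append.1 ha with ha | ha
  · rcases List.mem_append.1 ha with ha | ha
    · rcases List.mem_append.1 ha with ha | ha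
      · rw [(List.mem_replicate.1 ha).2]; left; rfl
      · rw [(List.mem_replicate.1 ha).2]; right; left; rfl
    · split at ha
      · cases ha
      · rw [List.mem_singleton.1 ha]; right; right; right; rfl
  · split at ha
    · cases ha
    · rw [List.mem_singleton.1 ha]; right; right; left; rfl

lemma wit_count0 (m n i j : ℕ) : (wit m n i j).count 0 = min i (m-1) := by
  unfold wit
  rw [List.count_append, List.count_append, List.count_append]
  have h1 : List.count (0 : Fin 5) (List.replicate (min i (m-1)) 0) = min i (m-1) := by
    simp [List.count_replicate]
  have h2 : List.count (0 : Fin 5) (List.replicate (min j (n-1)) 1) = 0 := by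
    simp [List.count_replicate]
  have h3 : List.count (0 : Fin 5) (if i < m then ([] : List (Fin 5)) else [3]) = 0 := by
    split <;> decide
  have h4 : List.count (0 : Fin 5) (if j < n then ([] : List (Fin 5)) else [2]) = 0 := by
    split <;> decide
  omega

lemma wit_count1 (m n i j : ℕ) : (wit m n i j).count 1 = min j (n-1) := by
  unfold wit
  rw [List.count_append, List.count_append, List.count_append]
  have h1 : List.count (1 : Fin 5) (List.replicate (min i (m-1)) 0) = 0 := by
    simp [List.count_replicate]
  have h2 : List.count (1 : Fin 5) (List.replicate (min j (n-1)) 1) = min j (n-1) := by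
    simp [List.count_replicate]
  have h3 : List.count (1 : Fin 5) (if i < m then ([] : List (Fin 5)) else [3]) = 0 := by
    split <;> decide
  have h4 : List.count (1 : Fin 5) (if j < n then ([] : List (Fin 5)) else [2]) = 0 := by
    split <;> decide
  omega

lemma stA_wit (m n i j : ℕ) (hm : 1 ≤ m) (hi : i ≤ m) : stA m (wit m n i j) = i := by
  unfold stA
  by_cases h1 : i < m
  · have hall : ∀ a ∈ wit m n i j, okA a := by
      intro a ha
      unfold wit at ha
      rcases List.mem_append.1 ha with ha | ha
      · rcases List.mem_append.1 ha with ha | ha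
        · rcases List.mem_append.1 ha with ha | ha
          · rw [(List.mem_replicate.1 ha).2]; left; rfl
          · rw [(List.mem_replicate.1 ha).2]; right; left; rfl
        · rw [if_pos h1] at ha
          cases ha
      · split at ha
        · cases ha
        · rw [List.mem_singleton.1 ha]; right; right; rfl
    rw [if_pos hall, wit_count0]
    omega
  · have h3 : (3 : Fin 5) ∈ wit m n i j := by
      unfold wit
      rw [if_neg h1]
      refine List.mem_append.2 (Or.inl (List.mem_append.2 (Or.inr ?_)))
      exact List.mem_singleton.2 rfl
    rw [if_neg]
    · omega
    · intro hall
      have := hall 3 h3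
      revert this
      decide

lemma stB_wit (m n i j : ℕ) (hn : 1 ≤ n) (hj : j ≤ n) : stB n (wit m n i j) = j := by
  unfold stB
  by_cases h1 : j < n
  · have hall : ∀ a ∈ wit m n i j, okB a := by
      intro a ha
      unfold wit at ha
      rcases List.mem_append.1 ha with ha | ha
      · rcases List.mem_append.1 ha with ha | ha
        · rcases List.mem_append.1 ha with ha | ha
          · rw [(List.mem_replicate.1 ha).2]; left; rfl
          · rw [(List.mem_replicate.1 ha).2]; right; left; rfl
        · split at ha
          · cases ha
          · rw [List.mem_singleton.1 ha]; right; right; rfl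
      · rw [if_pos h1] at ha
        cases ha
    rw [if_pos hall, wit_count1]
    omega
  · have h2 : (2 : Fin 5) ∈ wit m n i j := by
      unfold wit
      rw [if_neg h1]
      exact List.mem_append.2 (Or.inr (List.mem_singleton.2 rfl))
    rw [if_neg]
    · omega
    · intro hall
      have := hall 2 h2
      revert this
      decide

/-! ### Alphabets of the union and symmetric difference -/

lemma alphabetOf_U (m n : ℕ) (hm : 3 ≤ m) (hn : 3 ≤ n) :
    alphabetOf (QA m 0 ⊔ QB n 0) = {a | okC a} := by
  ext a
  constructor
  · rintro ⟨u, v, hu⟩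
    rcases hu with hu | hu
    · have := hu.1 a (by simp)
      rcases this with rfl | rfl | rfl
      · left; rfl
      · right; left; rfl
      · right; right; left; rfl
    · have := hu.1 a (by simp)
      rcases this with rfl | rfl | rfl
      · left; rfl
      · right; left; rfl
      · right; right; right; rfl
  · intro ha
    rcases ha with rfl | rfl | rfl | rfl
    all_goals first
    | · -- a ∈ {0, 1, 2} : use a word of QA m 0
        refine ⟨[], List.replicate (m-1) 0, Or.inl ⟨?_, ?_⟩⟩
        · intro b hb
          rcases List.mem_append.1 hb with hb | hb
          · rcases List.mem_append.1 hb with hb | hb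
            · cases hb
            · rw [List.mem_singleton.1 hb]; first | (left; rfl) | (right; left; rfl) | (right; right; rfl)
          · rw [(List.mem_replicate.1 hb).2]; left; rfl
        · show m - 1 - 0 ≤ List.count 0 ([] ++ _ ++ List.replicate (m - 1) 0)
          rw [List.nil_append, List.count_append]
          have h0 : List.count (0 : Fin 5) (List.replicate (m-1) 0) = m - 1 := by
            simp [List.count_replicate]
          omega
    | · -- a = 3 : use a word of QB n 0
        refine ⟨[], List.replicate (n-1) 1, Or.inr ⟨?_, ?_⟩⟩
        · intro b hb
          rcases List.mem_append.1 hb with hb | hb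
          · rcases List.mem_append.1 hb with hb | hb
            · cases hb
            · rw [List.mem_singleton.1 hb]; right; right; rfl
          · rw [(List.mem_replicate.1 hb).2]; right; left; rfl
        · show n - 1 - 0 ≤ List.count 1 ([] ++ _ ++ List.replicate (n - 1) 1)
          rw [List.nil_append, List.count_append]
          have h0 : List.count (1 : Fin 5) (List.replicate (n-1) 1) = n - 1 := by
            simp [List.count_replicate]
          omega


lemma alphabetOf_D (m n : ℕ) (hm : 3 ≤ m) (hn : 3 ≤ n) :
    alphabetOf ((QA m 0 \ QB n 0) ⊔ (QB n 0 \ QA m 0)) = {a | okC a} := by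
  ext a
  constructor
  · rintro ⟨u, v, hu⟩
    rcases hu with ⟨hu, -⟩ | ⟨hu, -⟩
    · have := hu.1 a (by simp)
      rcases this with rfl | rfl | rfl
      · left; rfl
      · right; left; rfl
      · right; right; left; rfl
    · have := hu.1 a (by simp)
      rcases this with rfl | rfl | rfl
      · left; rfl
      · right; left; rfl
      · right; right; right; rfl
  · intro ha
    have hA : ∀ a : Fin 5, okA a →
        a ∈ alphabetOf ((QA m 0 \ QB n 0) ⊔ (QB n 0 \ QA m 0)) := by
      intro a haA
      refine ⟨[], List.replicate (m-1) 0, Or.inl ⟨⟨?_, ?_⟩, ?_⟩⟩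
      · intro b hb
        rcases List.mem_append.1 hb with hb | hb
        · rcases List.mem_append.1 hb with hb | hb
          · cases hb
          · rw [List.mem_singleton.1 hb]; exact haA
        · rw [(List.mem_replicate.1 hb).2]; left; rfl
      · show m - 1 - 0 ≤ List.count 0 ([] ++ [a] ++ List.replicate (m - 1) 0)
        rw [List.nil_append, List.count_append]
        have h0 : List.count (0 : Fin 5) (List.replicate (m-1) 0) = m - 1 := by
          simp [List.count_replicate]
        omega
      · rintro ⟨-, h2⟩
        rw [List.nil_append, List.count_append] at h2
        have h0 : List.count (1 : Fin 5) (List.replicate (m-1) 0) = 0 := by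
          simp [List.count_replicate]
        have h1 : List.count (1 : Fin 5) [a] ≤ 1 := List.count_le_length
        omega
    rcases ha with rfl | rfl | rfl | rfl
    · exact hA 0 (Or.inl rfl)
    · exact hA 1 (Or.inr (Or.inl rfl))
    · exact hA 2 (Or.inr (Or.inr rfl))
    · refine ⟨[], List.replicate (n-1) 1, Or.inr ⟨⟨?_, ?_⟩, ?_⟩⟩
      · intro b hb
        rcases List.mem_append.1 hb with hb | hb
        · rcases List.mem_append.1 hb with hb | hb
          · cases hb
          · rw [List.mem_singleton.1 hb]; right; right; rfl
        · rw [(List.mem_replicate.1 hb).2]; right; left; rfl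
      · show n - 1 - 0 ≤ List.count 1 ([] ++ _ ++ List.replicate (n - 1) 1)
        rw [List.nil_append, List.count_append]
        have h0 : List.count (1 : Fin 5) (List.replicate (n-1) 1) = n - 1 := by
          simp [List.count_replicate]
        omega
      · rintro ⟨h1, -⟩
        have := h1 3 (by simp)
        revert this
        decide

/-! ### Quotient sets of union and symmetric difference -/

lemma quotSet_U (m n : ℕ) (hm : 3 ≤ m) (hn : 3 ≤ n) :
    quotientSet (QA m 0 ⊔ QB n 0)
      = UU m n '' (Set.Iio (m+1) ×ˢ Set.Iio (n+1)) := by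
  ext K
  constructor
  · rintro ⟨w, -, rfl⟩
    refine ⟨(stA m w, stB n w), ⟨?_, ?_⟩, (quot_UU m n (by omega) (by omega) w).symm⟩
    · have := stA_le m (by omega) w
      simp only [Set.mem_Iio]
      omega
    · have := stB_le n (by omega) w
      simp only [Set.mem_Iio]
      omega
  · rintro ⟨⟨i, j⟩, ⟨hi, hj⟩, rfl⟩
    simp only [Set.mem_Iio] at hi hj
    refine ⟨wit m n i j, ?_, ?_⟩
    · intro a ha
      rw [alphabetOf_U m n hm hn]
      exact wit_okC m n i j a ha
    · rw [quot_UU m n (by omega) (by omega), stA_wit m n i j (by omega) (by omega),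
        stB_wit m n i j (by omega) (by omega)]

lemma quotSet_D (m n : ℕ) (hm : 3 ≤ m) (hn : 3 ≤ n) :
    quotientSet ((QA m 0 \ QB n 0) ⊔ (QB n 0 \ QA m 0))
      = DD m n '' (Set.Iio (m+1) ×ˢ Set.Iio (n+1)) := by
  ext K
  constructor
  · rintro ⟨w, -, rfl⟩
    refine ⟨(stA m w, stB n w), ⟨?_, ?_⟩, (quot_DD m n (by omega) (by omega) w).symm⟩
    · have := stA_le m (by omega) w
      simp only [Set.mem_Iio]
      omega
    · have := stB_le n (by omega) w
      simp only [Set.mem_Iio]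
      omega
  · rintro ⟨⟨i, j⟩, ⟨hi, hj⟩, rfl⟩
    simp only [Set.mem_Iio] at hi hj
    refine ⟨wit m n i j, ?_, ?_⟩
    · intro a ha
      rw [alphabetOf_D m n hm hn]
      exact wit_okC m n i j a ha
    · rw [quot_DD m n (by omega) (by omega), stA_wit m n i j (by omega) (by omega),
        stB_wit m n i j (by omega) (by omega)]

lemma prod_Iio_finite (m n : ℕ) :
    (Set.Iio (m+1) ×ˢ Set.Iio (n+1) : Set (ℕ × ℕ)).Finite :=
  (Set.finite_Iio _).prod (Set.finite_Iio _)

lemma prod_Iio_ncard (m n : ℕ) :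
    (Set.Iio (m+1) ×ˢ Set.Iio (n+1) : Set (ℕ × ℕ)).ncard = (m+1) * (n+1) := by
  rw [← Finset.coe_range, ← Finset.coe_range, ← Finset.coe_product,
    Set.ncard_coe_finset, Finset.card_product, Finset.card_range, Finset.card_range]

lemma hasComplexity_U (m n : ℕ) (hm : 3 ≤ m) (hn : 3 ≤ n) :
    HasComplexity (QA m 0 ⊔ QB n 0) ((m+1) * (n+1)) := by
  rw [HasComplexity, quotSet_U m n hm hn]
  constructor
  · exact (prod_Iio_finite m n).image _
  · rw [Set.ncard_image_of_injOn (UU_injOn m n), prod_Iio_ncard]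

lemma hasComplexity_D (m n : ℕ) (hm : 3 ≤ m) (hn : 3 ≤ n) :
    HasComplexity ((QA m 0 \ QB n 0) ⊔ (QB n 0 \ QA m 0)) ((m+1) * (n+1)) := by
  rw [HasComplexity, quotSet_D m n hm hn]
  constructor
  · exact (prod_Iio_finite m n).image _
  · rw [Set.ncard_image_of_injOn (DD_injOn m n), prod_Iio_ncard]

end RightIdealWitness

theorem right_ideal_union_symmDiff_tight (m n : ℕ) (hm : 3 ≤ m) (hn : 3 ≤ n) :
    ∃ L' L : Language (Fin 5), IsRightIdeal L' ∧ IsRightIdeal L ∧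
      (alphabetOf L' \ alphabetOf L).Nonempty ∧
      (alphabetOf L \ alphabetOf L').Nonempty ∧
      HasComplexity L' m ∧ HasComplexity L n ∧
      HasComplexity (L' ⊔ L) ((m + 1) * (n + 1)) ∧
      HasComplexity ((L' \ L) ⊔ (L \ L')) ((m + 1) * (n + 1)) := by
  refine ⟨RightIdealWitness.QA m 0, RightIdealWitness.QB n 0,
    RightIdealWitness.rightIdeal_A m, RightIdealWitness.rightIdeal_B n, ?_, ?_,
    RightIdealWitness.hasComplexity_A m (by omega),
    RightIdealWitness.hasComplexity_B n (by omega),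
    RightIdealWitness.hasComplexity_U m n hm hn,
    RightIdealWitness.hasComplexity_D m n hm hn⟩
  · refine ⟨2, ?_, ?_⟩
    · rw [RightIdealWitness.alphabetOf_A]
      right; right; rfl
    · rw [RightIdealWitness.alphabetOf_B]
      intro h
      revert h
      decide
  · refine ⟨3, ?_, ?_⟩
    · rw [RightIdealWitness.alphabetOf_B]
      right; right; rfl
    · rw [RightIdealWitness.alphabetOf_A]
      intro h
      revert h
      decide
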